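/- The map f:ℕ→ℕ defined by f(n)=⌊φn⌋+1 if n∈A and f(n)=⌊(φ−1)n⌋ if n∈B is a well-defined bijection of ℕ onto itself satisfying f(f(n))=n for all n∈ℕ and f≠id; that is, f is a permutation of ℕ of order 2. -/

import Mathlib

/-- The golden ratio φ = (1 + √5)/2. -/
noncomputable def phi : ℝ := (1 + Real.sqrt 5) / 2

/-- The lower Wythoff sequence a(n) = ⌊nφ⌋. -/
noncomputable def wa (n : ℕ) : ℕ := ⌊(n : ℝ) * phi⌋₊

/-- The upper Wythoff sequence b(n) = ⌊nφ²⌋. -/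
noncomputable def wb (n : ℕ) : ℕ := ⌊(n : ℝ) * phi ^ 2⌋₊

/-- A = range of the lower Wythoff sequence. -/
def WA : Set ℕ := {m | ∃ n : ℕ, 0 < n ∧ wa n = m}

/-- B = range of the upper Wythoff sequence. -/
def WB : Set ℕ := {m | ∃ n : ℕ, 0 < n ∧ wb n = m}

open scoped Classical in
/-- f(n) = ⌊φn⌋+1 if n ∈ A, and f(n) = ⌊(φ−1)n⌋ if n ∈ B. -/
noncomputable def f (n : ℕ) : ℕ :=
  if n ∈ WA then wa n + 1 else ⌊(phi - 1) * (n : ℝ)⌋₊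

lemma phi_eq_gold : phi = Real.goldenRatio := rfl

lemma one_lt_phi : 1 < phi := phi_eq_gold ▸ Real.one_lt_goldenRatio

lemma phi_lt_two : phi < 2 := phi_eq_gold ▸ Real.goldenRatio_lt_two

lemma phi_sq : phi ^ 2 = phi + 1 := phi_eq_gold ▸ Real.goldenRatio_sq

lemma phi_irr : Irrational phi := phi_eq_gold ▸ Real.goldenRatio_irrational

lemma phi_pos : 0 < phi := lt_trans one_pos one_lt_phi

lemma mul_phi_irr {m : ℕ} (hm : 0 < m) : Irrational ((m : ℝ) * phi) :=
  phi_irr.natCast_mul hm.ne'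

lemma fract_pos {m : ℕ} (hm : 0 < m) : 0 < Int.fract ((m : ℝ) * phi) := by
  rw [Int.fract_pos]
  exact fun h => (mul_phi_irr hm).ne_int _ h

/-- Helper: characterize Nat.floor. -/
lemma floor_eq_of {x : ℝ} {N : ℕ} (h1 : (N : ℝ) ≤ x) (h2 : x < N + 1) : ⌊x⌋₊ = N := by
  rw [Nat.floor_eq_iff (le_trans (Nat.cast_nonneg N) h1)]
  exact ⟨h1, h2⟩

/-- wa m as a real number. -/
lemma wa_real (m : ℕ) : (wa m : ℝ) = (m : ℝ) * phi - Int.fract ((m : ℝ) * phi) := by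
  have h0 : (0 : ℝ) ≤ (m : ℝ) * phi := mul_nonneg (Nat.cast_nonneg _) phi_pos.le
  have : ((⌊(m : ℝ) * phi⌋₊ : ℕ) : ℝ) = ((⌊(m : ℝ) * phi⌋ : ℤ) : ℝ) := by
    exact_mod_cast Int.natCast_floor_eq_floor h0
  unfold wa
  push_cast at this ⊢
  rw [this, Int.self_sub_fract]

/-- wb m as a real number, with the same fractional part. -/
lemma wb_real (m : ℕ) : (wb m : ℝ) = (m : ℝ) * phi ^ 2 - Int.fract ((m : ℝ) * phi) := by
  have h0 : (0 : ℝ) ≤ (m : ℝ) * phi ^ 2 := mul_nonneg (Nat.cast_nonneg _) (sq_nonneg _)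
  have hfr : Int.fract ((m : ℝ) * phi ^ 2) = Int.fract ((m : ℝ) * phi) := by
    have : (m : ℝ) * phi ^ 2 = (m : ℝ) * phi + (m : ℕ) := by
      rw [phi_sq]; ring
    rw [this, Int.fract_add_natCast]
  have : ((⌊(m : ℝ) * phi ^ 2⌋₊ : ℕ) : ℝ) = ((⌊(m : ℝ) * phi ^ 2⌋ : ℤ) : ℝ) := by
    exact_mod_cast Int.natCast_floor_eq_floor h0
  unfold wb
  push_cast at this ⊢
  rw [this, ← hfr, Int.self_sub_fract]

lemma wb_eq_wa_add (m : ℕ) : wb m = wa m + m := by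
  have h := wb_real m
  have h' := wa_real m
  have : (wb m : ℝ) = (wa m : ℝ) + m := by
    rw [h, h', phi_sq]; ring
  exact_mod_cast this

lemma wa_pos {m : ℕ} (hm : 0 < m) : 0 < wa m := by
  have : (1 : ℝ) ≤ (m : ℝ) * phi := by
    have : (1 : ℝ) ≤ (m : ℝ) := by exact_mod_cast hm
    nlinarith [one_lt_phi]
  exact Nat.le_floor (by exact_mod_cast this)

lemma mem_WA {m : ℕ} (hm : 0 < m) : wa m ∈ WA := ⟨m, hm, rfl⟩

/-- Key identity 1: wa (wa m) + 1 = wb m. -/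
lemma wa_wa (m : ℕ) (hm : 0 < m) : wa (wa m) + 1 = wb m := by
  set r := Int.fract ((m : ℝ) * phi) with hr
  have hr0 : 0 < r := fract_pos hm
  have hr1 : r < 1 := Int.fract_lt_one _
  have h1 : 1 < phi := one_lt_phi
  have h2 : phi < 2 := phi_lt_two
  have hsq : phi ^ 2 = phi + 1 := phi_sq
  have hwa := wa_real m
  have hwb := wb_real m
  have hwb1 : 1 ≤ wb m := by
    rw [wb_eq_wa_add]; omega
  -- (wa m : ℝ) * phi = wb m - r * (phi - 1)
  have key : (wa m : ℝ) * phi = (wb m : ℝ) - r * (phi - 1) := by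
    rw [hwa, hwb]; nlinarith [hsq]
  have : wa (wa m) = wb m - 1 := by
    apply floor_eq_of
    · rw [Nat.cast_sub hwb1]
      push_cast
      nlinarith
    · rw [Nat.cast_sub hwb1]
      push_cast
      nlinarith
  omega

/-- Key identity 2: ⌊(φ-1) * wb m⌋ = wa m. -/
lemma floor_wb (m : ℕ) (hm : 0 < m) : ⌊(phi - 1) * (wb m : ℝ)⌋₊ = wa m := by
  set r := Int.fract ((m : ℝ) * phi) with hr
  have hr0 : 0 < r := fract_pos hm
  have hr1 : r < 1 := Int.fract_lt_one _
  have h1 : 1 < phi := one_lt_phi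
  have h2 : phi < 2 := phi_lt_two
  have hsq : phi ^ 2 = phi + 1 := phi_sq
  have hwa := wa_real m
  have hwb := wb_real m
  apply floor_eq_of
  · rw [hwa]
    nlinarith [hwb, hsq]
  · rw [hwa]
    nlinarith [hwb, hsq]

/-- Disjointness: wa j ≠ wb k for positive j, k. -/
lemma wa_ne_wb {j k : ℕ} (hj : 0 < j) (hk : 0 < k) : wa j ≠ wb k := by
  intro hE
  set r1 := Int.fract ((j : ℝ) * phi) with hr1d
  set r2 := Int.fract ((k : ℝ) * phi) with hr2d
  have hr10 : 0 < r1 := fract_pos hj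
  have hr11 : r1 < 1 := Int.fract_lt_one _
  have hr20 : 0 < r2 := fract_pos hk
  have hr21 : r2 < 1 := Int.fract_lt_one _
  have h1 : 1 < phi := one_lt_phi
  have h2 : phi < 2 := phi_lt_two
  have hsq : phi ^ 2 = phi + 1 := phi_sq
  have hwa := wa_real j
  have hwb := wb_real k
  set N := wa j with hN
  have hEr : (N : ℝ) = (wb k : ℝ) := by exact_mod_cast hE
  -- j * phi = N + r1, k * phi^2 = N + r2
  have e1 : (j : ℝ) * phi = (N : ℝ) + r1 := by rw [hwa]; ring
  have e2 : (k : ℝ) * phi ^ 2 = (N : ℝ) + r2 := by rw [hEr, hwb]; ring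
  have hmul : phi * (phi - 1) = 1 := by nlinarith
  have ej : (j : ℝ) = ((N : ℝ) + r1) * (phi - 1) := by
    have := congrArg (· * (phi - 1)) e1
    nlinarith [this]
  have ek : (k : ℝ) = ((N : ℝ) + r2) * (2 - phi) := by
    have := congrArg (· * (2 - phi)) e2
    nlinarith [this]
  have hlt1 : (N : ℝ) < (j : ℝ) + (k : ℝ) := by nlinarith
  have hlt2 : (j : ℝ) + (k : ℝ) < (N : ℝ) + 1 := by nlinarith
  have h1' : N < j + k := by exact_mod_cast hlt1
  have h2' : j + k < N + 1 := by exact_mod_cast hlt2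
  omega

lemma wb_not_mem_WA {k : ℕ} (hk : 0 < k) : wb k ∉ WA := by
  rintro ⟨j, hj, hje⟩
  exact wa_ne_wb hj hk hje

/-- Coverage: every positive natural is in WA or WB. -/
lemma cover {n : ℕ} (hn : 0 < n) : n ∈ WA ∨ n ∈ WB := by
  have hconj : phi.HolderConjugate (phi ^ 2) := by
    rw [Real.holderConjugate_iff]; constructor
    · exact one_lt_phi
    · have h1 : 1 < phi := one_lt_phi
      have hsq : phi ^ 2 = phi + 1 := phi_sq
      field_simp
      nlinarith
  have hsymm := phi_irr.beattySeq_symmDiff_beattySeq_pos hconj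
  have hmem := hsymm.symm.subset (show (n : ℤ) ∈ {n : ℤ | 0 < n} from show (0:ℤ) < (n:ℤ) by exact_mod_cast hn)
  rw [Set.mem_symmDiff] at hmem
  have conv1 : ∀ k : ℤ, k > 0 → beattySeq phi k = (n : ℤ) → n ∈ WA := by
    intro k hk he
    refine ⟨k.toNat, by omega, ?_⟩
    have hk' : ((k.toNat : ℕ) : ℝ) = (k : ℝ) := by exact_mod_cast Int.toNat_of_nonneg hk.le
    have h0 : (0 : ℝ) ≤ (k.toNat : ℝ) * phi := mul_nonneg (Nat.cast_nonneg _) phi_pos.le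
    have : (wa k.toNat : ℤ) = ⌊(k.toNat : ℝ) * phi⌋ := Int.natCast_floor_eq_floor h0
    rw [hk'] at this
    have : (wa k.toNat : ℤ) = (n : ℤ) := by
      rw [this, ← he, beattySeq]
    exact_mod_cast this
  have conv2 : ∀ k : ℤ, k > 0 → beattySeq (phi ^ 2) k = (n : ℤ) → n ∈ WB := by
    intro k hk he
    refine ⟨k.toNat, by omega, ?_⟩
    have hk' : ((k.toNat : ℕ) : ℝ) = (k : ℝ) := by exact_mod_cast Int.toNat_of_nonneg hk.le
    have h0 : (0 : ℝ) ≤ (k.toNat : ℝ) * phi ^ 2 := mul_nonneg (Nat.cast_nonneg _) (sq_nonneg _)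
    have : (wb k.toNat : ℤ) = ⌊(k.toNat : ℝ) * phi ^ 2⌋ := Int.natCast_floor_eq_floor h0
    rw [hk'] at this
    have : (wb k.toNat : ℤ) = (n : ℤ) := by
      rw [this, ← he, beattySeq]
    exact_mod_cast this
  rcases hmem with ⟨⟨k, hk, he⟩, -⟩ | ⟨⟨k, hk, he⟩, -⟩
  · exact Or.inl (conv1 k hk he)
  · exact Or.inr (conv2 k hk he)

lemma f_wa {m : ℕ} (hm : 0 < m) : f (wa m) = wb m := by
  unfold f
  rw [if_pos (mem_WA hm)]
  exact wa_wa m hm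

lemma f_wb {m : ℕ} (hm : 0 < m) : f (wb m) = wa m := by
  unfold f
  rw [if_neg (wb_not_mem_WA hm), mul_comm]
  rw [mul_comm]
  exact floor_wb m hm

lemma f_f {n : ℕ} (hn : 0 < n) : f (f n) = n := by
  rcases cover hn with ⟨m, hm, he⟩ | ⟨m, hm, he⟩
  · rw [← he, f_wa hm, f_wb hm]
  · rw [← he, f_wb hm, f_wa hm]

lemma f_pos {n : ℕ} (hn : 0 < n) : 0 < f n := by
  rcases cover hn with ⟨m, hm, he⟩ | ⟨m, hm, he⟩
  · rw [← he, f_wa hm]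
    rw [wb_eq_wa_add]
    have := wa_pos hm
    omega
  · rw [← he, f_wb hm]
    exact wa_pos hm

theorem stmt_7 :
    Set.BijOn f {n : ℕ | 0 < n} {n : ℕ | 0 < n} ∧
    (∀ n : ℕ, 0 < n → f (f n) = n) ∧
    (∃ n : ℕ, 0 < n ∧ f n ≠ n) := by
  refine ⟨⟨fun n hn => f_pos hn, fun x hx y hy hxy => ?_, fun n hn => ⟨f n, f_pos hn, f_f hn⟩⟩,
    fun n hn => f_f hn, ⟨1, one_pos, ?_⟩⟩
  · calc x = f (f x) := (f_f hx).symm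
      _ = f (f y) := by rw [hxy]
      _ = y := f_f hy
  · have hwa1 : wa 1 = 1 := by
      apply floor_eq_of <;> push_cast <;>
        [linarith [one_lt_phi]; linarith [phi_lt_two]]
    have : f 1 = wb 1 := by
      have := f_wa (m := 1) one_pos
      rwa [hwa1] at this
    rw [this, wb_eq_wa_add, hwa1]
    omega
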